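/- arXiv:2406.06189 — 3 statements merged into one kernel-verified Lean document; each statement's English description precedes it below -/
import Mathlib

section
/- Let $F:\mathbb{R}^n \to \mathbb{R}^n$ be differentiable and let $G_j$ be the implicit local solve map satisfying $R_j F(R_j^T G_j(u) + (I - R_j^T R_j)u) = 0$ for all $u$, with $G_j$ differentiable. Assume the local Jacobian $R_j \nabla F(\tilde u_j) R_j^T$ is invertible, where $\tilde u_j = R_j^T G_j(u) + (I - R_j^T R_j)u$. Then $\nabla G_j(u) = -(R_j \nabla F(\tilde u_j) R_j^T)^{-1} R_j \nabla F(\tilde u_j)(I - R_j^T R_j)$. -/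
open Matrix

theorem stmt2 (n nj : ℕ)
    (F : (Fin n → ℝ) → (Fin n → ℝ))
    (J : (Fin n → ℝ) → Matrix (Fin n) (Fin n) ℝ)
    (hF : ∀ x, HasFDerivAt F (LinearMap.toContinuousLinearMap (J x).mulVecLin) x)
    (R : Matrix (Fin nj) (Fin n) ℝ) (hRRT : R * Rᵀ = 1)
    (G : (Fin n → ℝ) → (Fin nj → ℝ))
    (DG : (Fin n → ℝ) → Matrix (Fin nj) (Fin n) ℝ)
    (hGd : ∀ u, HasFDerivAt G (LinearMap.toContinuousLinearMap (DG u).mulVecLin) u)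
    (hG : ∀ u, R.mulVec (F (Rᵀ.mulVec (G u) + (u - (Rᵀ * R).mulVec u))) = 0)
    (u : Fin n → ℝ)
    (ut : Fin n → ℝ) (hut : ut = Rᵀ.mulVec (G u) + (u - (Rᵀ * R).mulVec u))
    (hinv : IsUnit (R * J ut * Rᵀ)) :
    DG u = -((R * J ut * Rᵀ)⁻¹ * (R * J ut) * (1 - Rᵀ * R)) := by
  -- derivative of the inner map φ
  set φ : (Fin n → ℝ) → (Fin n → ℝ) := fun v => Rᵀ.mulVec (G v) + (v - (Rᵀ * R).mulVec v) with hφdef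
  have hφ : HasFDerivAt φ
      (LinearMap.toContinuousLinearMap (Rᵀ * DG u + (1 - Rᵀ * R)).mulVecLin) u := by
    have h1 : HasFDerivAt (fun v => Rᵀ.mulVec (G v))
        (LinearMap.toContinuousLinearMap (Rᵀ * DG u).mulVecLin) u := by
      have := (LinearMap.toContinuousLinearMap (Rᵀ).mulVecLin).hasFDerivAt.comp u (hGd u)
      refine this.congr_fderiv ?_
      ext v i
      simp [Matrix.mulVecLin_mul]
    have h2 : HasFDerivAt (fun v : Fin n → ℝ => v - (Rᵀ * R).mulVec v)
        (LinearMap.toContinuousLinearMap ((1 : Matrix (Fin n) (Fin n) ℝ) - Rᵀ * R).mulVecLin) u := by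
      have := (LinearMap.toContinuousLinearMap ((1 : Matrix (Fin n) (Fin n) ℝ) - Rᵀ * R).mulVecLin).hasFDerivAt (x := u)
      convert this using 2 with v
      simp [Matrix.sub_mulVec, Matrix.one_mulVec]
      rw [← Matrix.mulVec_mulVec, Matrix.mulVec_transpose]
    have := h1.add h2
    refine this.congr_fderiv ?_
    ext v i
    simp [Matrix.mulVecLin_add (Rᵀ * DG u)]
  have hH : HasFDerivAt (fun v => R.mulVec (F (φ v)))
      (LinearMap.toContinuousLinearMap (R * J ut * (Rᵀ * DG u + (1 - Rᵀ * R))).mulVecLin) u := by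
    have hut' : ut = φ u := hut
    have := ((LinearMap.toContinuousLinearMap (R).mulVecLin).hasFDerivAt.comp _
      ((hF (φ u)).comp u hφ))
    rw [← hut'] at this
    refine this.congr_fderiv ?_
    ext v i
    rw [Matrix.mul_assoc, Matrix.mulVecLin_mul, Matrix.mulVecLin_mul]
    rfl
  have hconst : HasFDerivAt (fun v => R.mulVec (F (φ v))) (0 : (Fin n → ℝ) →L[ℝ] (Fin nj → ℝ)) u := by
    have : (fun v => R.mulVec (F (φ v))) = fun _ => (0 : Fin nj → ℝ) := funext fun v => hG v
    rw [this]
    exact hasFDerivAt_const _ _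
  have hzero : (R * J ut * (Rᵀ * DG u + (1 - Rᵀ * R))) = 0 := by
    have hCLM := hH.unique hconst
    ext i k
    have := congrFun (congrArg (fun L => (L : (Fin n → ℝ) →L[ℝ] (Fin nj → ℝ)) (Pi.single k 1)) hCLM) i
    simp only [LinearMap.coe_toContinuousLinearMap', Matrix.mulVecLin_apply, Matrix.mulVec_single_one, ContinuousLinearMap.zero_apply] at this
    simpa using this
  -- algebra
  have hdet : IsUnit (R * J ut * Rᵀ).det := (Matrix.isUnit_iff_isUnit_det _).mp hinv
  have hBinv : (R * J ut * Rᵀ)⁻¹ * (R * J ut * Rᵀ) = 1 := Matrix.nonsing_inv_mul _ hdet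
  rw [Matrix.mul_add, ← Matrix.mul_assoc] at hzero
  have h2 : R * J ut * Rᵀ * DG u = -(R * J ut * (1 - Rᵀ * R)) := by
    rw [eq_neg_iff_add_eq_zero]; exact hzero
  have h3 : DG u = (R * J ut * Rᵀ)⁻¹ * (R * J ut * Rᵀ) * DG u := by
    rw [hBinv, Matrix.one_mul]
  rw [h3, Matrix.mul_assoc, h2]
  simp only [Matrix.mul_neg, ← Matrix.mul_assoc]
end

section
/- Consider nodes $i, \ell$ with transmissibility $\tau_{i\ell} \in \mathbb{R}$ and define the upwind depth $h_{i\ell} = h_i$ if $\tau_{i\ell}(u_i - u_\ell) \ge 0$ and $h_{i\ell} = h_\ell$ otherwise, where $h_i, h_\ell \ge 0$. If $\tau_{i\ell} \ge 0$, then the upwind flux $q_{i\ell} = \tau_{i\ell} h_{i\ell}^\alpha (u_i - u_\ell)$ (with $\alpha \ge 0$) satisfies the monotonicity property: $q_{i\ell}$ is nondecreasing in $u_i$ and nonincreasing in $u_\ell$, provided $h_i = \max(u_i - z_i, 0)$ and $h_\ell = \max(u_\ell - z_\ell, 0)$. -/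
theorem stmt5 (τ α zi zl : ℝ) (hτ : 0 ≤ τ) (hα : 0 ≤ α) :
    (∀ ul : ℝ, Monotone fun ui : ℝ =>
      τ * (if 0 ≤ τ * (ui - ul) then max (ui - zi) 0 else max (ul - zl) 0) ^ α * (ui - ul)) ∧
    (∀ ui : ℝ, Antitone fun ul : ℝ =>
      τ * (if 0 ≤ τ * (ui - ul) then max (ui - zi) 0 else max (ul - zl) 0) ^ α * (ui - ul)) := by
  rcases eq_or_lt_of_le hτ with hτ0 | hτpos
  · constructor
    · intro ul a b hab
      simp [← hτ0]
    · intro ui a b hab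
      simp [← hτ0]
  constructor
  · intro ul a b hab
    simp only
    by_cases ha : ul ≤ a
    · have hb : ul ≤ b := ha.trans hab
      rw [if_pos (mul_nonneg hτ (by linarith)), if_pos (mul_nonneg hτ (by linarith))]
      have h1 : max (a - zi) 0 ≤ max (b - zi) 0 := max_le_max (by linarith) le_rfl
      have h0 : (0:ℝ) ≤ max (a - zi) 0 := le_max_right _ _
      have h2 := Real.rpow_le_rpow h0 h1 hα
      exact mul_le_mul (mul_le_mul_of_nonneg_left h2 hτ) (by linarith) (by linarith)
        (by positivity)
    · push_neg at ha
      by_cases hb : ul ≤ b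
      · rw [if_neg (by push_neg; exact mul_neg_of_pos_of_neg hτpos (by linarith)),
          if_pos (mul_nonneg hτ (by linarith))]
        have hA : (0:ℝ) ≤ τ * max (ul - zl) 0 ^ α := by positivity
        have hB : (0:ℝ) ≤ τ * max (b - zi) 0 ^ α := by positivity
        nlinarith
      · push_neg at hb
        rw [if_neg (by push_neg; exact mul_neg_of_pos_of_neg hτpos (by linarith)),
          if_neg (by push_neg; exact mul_neg_of_pos_of_neg hτpos (by linarith))]
        exact mul_le_mul_of_nonneg_left (by linarith) (by positivity)
  · intro ui a b hab
    simp only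
    by_cases hb : b ≤ ui
    · have ha : a ≤ ui := hab.trans hb
      rw [if_pos (mul_nonneg hτ (by linarith)), if_pos (mul_nonneg hτ (by linarith))]
      exact mul_le_mul_of_nonneg_left (by linarith) (by positivity)
    · push_neg at hb
      by_cases ha : a ≤ ui
      · rw [if_neg (by push_neg; exact mul_neg_of_pos_of_neg hτpos (by linarith)),
          if_pos (mul_nonneg hτ (by linarith))]
        have hA : (0:ℝ) ≤ τ * max (ui - zi) 0 ^ α := by positivity
        have hB : (0:ℝ) ≤ τ * max (b - zl) 0 ^ α := by positivity
        nlinarith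
      · push_neg at ha
        rw [if_neg (by push_neg; exact mul_neg_of_pos_of_neg hτpos (by linarith)),
          if_neg (by push_neg; exact mul_neg_of_pos_of_neg hτpos (by linarith))]
        have h1 : max (a - zl) 0 ≤ max (b - zl) 0 := max_le_max (by linarith) le_rfl
        have h0 : (0:ℝ) ≤ max (a - zl) 0 := le_max_right _ _
        have h2 := Real.rpow_le_rpow h0 h1 hα
        have hcA : (0:ℝ) ≤ τ * max (a - zl) 0 ^ α := by positivity
        have hcB : (0:ℝ) ≤ τ * max (b - zl) 0 ^ α := by positivity
        have hle : τ * max (a - zl) 0 ^ α ≤ τ * max (b - zl) 0 ^ α :=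
          mul_le_mul_of_nonneg_left h2 hτ
        have key := mul_le_mul hle (show a - ui ≤ b - ui by linarith) (by linarith) hcB
        nlinarith [key]
end

section
/- Let $A \in \mathbb{R}^{n \times n}$ with nonpositive off-diagonal entries ($A_{i\ell} \le 0$ for $i \ne \ell$) and nonnegative row sums ($\sum_\ell A_{i\ell} \ge 0$ for all $i$), let $M$ be a diagonal matrix with strictly positive diagonal entries, and let $\Delta t > 0$. Suppose $u \in \mathbb{R}^n$ satisfies $\frac{1}{\Delta t} M(u - u^{old}) + A u = 0$ with $u^{old} \ge 0$ componentwise. Then $u \ge 0$ componentwise. -/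
theorem stmt6 (n : ℕ) (A : Matrix (Fin n) (Fin n) ℝ)
    (hoff : ∀ i ℓ, i ≠ ℓ → A i ℓ ≤ 0)
    (hrow : ∀ i, 0 ≤ ∑ ℓ, A i ℓ)
    (m : Fin n → ℝ) (hm : ∀ i, 0 < m i)
    (Δt : ℝ) (hΔt : 0 < Δt)
    (u uold : Fin n → ℝ) (huold : ∀ i, 0 ≤ uold i)
    (heq : ∀ i, (1 / Δt) * (m i * (u i - uold i)) + ∑ ℓ, A i ℓ * u ℓ = 0) :
    ∀ i, 0 ≤ u i := by
  intro i
  by_contra hneg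
  push_neg at hneg
  obtain ⟨j, -, hj⟩ := Finset.exists_min_image Finset.univ u ⟨i, Finset.mem_univ i⟩
  have hjmin : ∀ ℓ, u j ≤ u ℓ := fun ℓ => hj ℓ (Finset.mem_univ ℓ)
  have huj : u j < 0 := lt_of_le_of_lt (hjmin i) hneg
  have hsum : ∑ ℓ, A j ℓ * u ℓ ≤ 0 := by
    have : ∑ ℓ, A j ℓ * u ℓ =
        (∑ ℓ, A j ℓ * (u ℓ - u j)) + (∑ ℓ, A j ℓ) * u j := by
      rw [Finset.sum_mul, ← Finset.sum_add_distrib]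
      congr 1; funext ℓ; ring
    rw [this]
    have h1 : ∑ ℓ, A j ℓ * (u ℓ - u j) ≤ 0 := by
      apply Finset.sum_nonpos
      intro ℓ _
      rcases eq_or_ne j ℓ with h | h
      · simp [h]
      · exact mul_nonpos_of_nonpos_of_nonneg (hoff j ℓ h)
          (sub_nonneg.mpr (hjmin ℓ))
    have h2 : (∑ ℓ, A j ℓ) * u j ≤ 0 :=
      mul_nonpos_of_nonneg_of_nonpos (hrow j) huj.le
    linarith
  have hfirst : (1 / Δt) * (m j * (u j - uold j)) < 0 := by
    have : u j - uold j < 0 := by linarith [huold j]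
    have := mul_neg_of_pos_of_neg (hm j) this
    exact mul_neg_of_pos_of_neg (by positivity) this
  linarith [heq j]
end
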